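/- Let R be a ring and f an n-tuple of formal power series over R in n variables with f(0) = 0 and det(Jf)(0) a unit in R. Then there exists a unique n-tuple g of formal power series over R with g(0) = 0 and g(f(x)) = f(g(x)) = x. -/

import Mathlib

open MvPowerSeries

/-- Substitution of the tuple `f` of multivariate power series into the power series
`g`: the coefficient of a monomial `d` in `g(f)` is the (finite, when every `f j` has
zero constant coefficient) sum over the exponents `e` of total degree at most that of
`d` of `(coeff e g) · coeff d (∏ j, (f j)^(e j))`. -/
noncomputable def substPS {R : Type*} [CommRing R] {n : ℕ}
    (f : Fin n → MvPowerSeries (Fin n) R) (g : MvPowerSeries (Fin n) R) :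
    MvPowerSeries (Fin n) R :=
  fun d =>
    ∑ e ∈ Finset.Iic
        (Finsupp.equivFunOnFinite.symm fun _ : Fin n => d.sum fun _ v => v),
      MvPowerSeries.coeff e g *
        MvPowerSeries.coeff d (∏ j : Fin n, (f j) ^ (e j))

namespace IFTAux

variable {R : Type*} [CommRing R] {n : ℕ}

/-- total degree of an exponent -/
def dg (d : Fin n →₀ ℕ) : ℕ := d.sum fun _ v => v

lemma dg_eq_sum (d : Fin n →₀ ℕ) : dg d = ∑ j, d j :=
  Finsupp.sum_fintype _ _ (fun _ => rfl)

lemma dg_apply_le (d : Fin n →₀ ℕ) (j : Fin n) : d j ≤ dg d := by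
  rw [dg_eq_sum]
  exact Finset.single_le_sum (fun _ _ => Nat.zero_le _) (Finset.mem_univ j)

lemma dg_add (a b : Fin n →₀ ℕ) : dg (a + b) = dg a + dg b := by
  simp [dg_eq_sum, Finset.sum_add_distrib]

lemma dg_zero : dg (0 : Fin n →₀ ℕ) = 0 := by simp [dg]

lemma dg_eq_zero {d : Fin n →₀ ℕ} (h : dg d = 0) : d = 0 := by
  rw [dg_eq_sum] at h
  ext j
  exact (Finset.sum_eq_zero_iff.mp h) j (Finset.mem_univ j)

lemma dg_single (k : Fin n) (m : ℕ) : dg (Finsupp.single k m) = m := by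
  simp [dg, Finsupp.sum_single_index]

lemma dg_eq_one {d : Fin n →₀ ℕ} (h : dg d = 1) : ∃ k, d = Finsupp.single k 1 := by
  classical
  rw [dg_eq_sum] at h
  obtain ⟨k, hk⟩ : ∃ k, d k ≠ 0 := by
    by_contra hc
    push_neg at hc
    simp [hc] at h
  have hsplit := Finset.add_sum_erase Finset.univ d (Finset.mem_univ k)
  have hk1 : 1 ≤ d k := Nat.one_le_iff_ne_zero.mpr hk
  have hrest : ∑ j ∈ Finset.univ.erase k, d j = 0 := by omega
  refine ⟨k, ?_⟩
  ext j
  rcases eq_or_ne j k with rfl | hj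
  · rw [Finsupp.single_eq_same]; omega
  · rw [Finsupp.single_eq_of_ne' (Ne.symm hj)]
    exact Finset.sum_eq_zero_iff.mp hrest j (Finset.mem_erase.mpr ⟨hj, Finset.mem_univ j⟩)

/-- the summation bound appearing in `substPS` -/
noncomputable def bnd (m : ℕ) : Fin n →₀ ℕ := Finsupp.equivFunOnFinite.symm fun _ : Fin n => m

lemma mem_Iic_bnd {m : ℕ} {e : Fin n →₀ ℕ} :
    e ∈ Finset.Iic (bnd m) ↔ ∀ j, e j ≤ m := by
  rw [Finset.mem_Iic, Finsupp.le_def]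
  simp [bnd]

lemma coeff_substPS (f : Fin n → MvPowerSeries (Fin n) R) (g : MvPowerSeries (Fin n) R)
    (d : Fin n →₀ ℕ) :
    MvPowerSeries.coeff d (substPS f g) =
      ∑ e ∈ Finset.Iic (bnd (dg d)),
        MvPowerSeries.coeff e g * MvPowerSeries.coeff d (∏ j : Fin n, (f j) ^ (e j)) :=
  rfl

/-- `φ` vanishes in degrees `< k` -/
def Pord (k : ℕ) (φ : MvPowerSeries (Fin n) R) : Prop :=
  ∀ d, dg d < k → MvPowerSeries.coeff d φ = 0

lemma Pord.of_le {k l : ℕ} {φ : MvPowerSeries (Fin n) R} (h : Pord l φ) (hkl : k ≤ l) :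
    Pord k φ := fun d hd => h d (lt_of_lt_of_le hd hkl)

lemma Pord_zero (k : ℕ) : Pord k (0 : MvPowerSeries (Fin n) R) := fun d _ => map_zero _

lemma Pord_add {k : ℕ} {φ ψ : MvPowerSeries (Fin n) R} (h1 : Pord k φ) (h2 : Pord k ψ) :
    Pord k (φ + ψ) := fun d hd => by rw [map_add, h1 d hd, h2 d hd, add_zero]

lemma Pord_mul {k l : ℕ} {φ ψ : MvPowerSeries (Fin n) R} (h1 : Pord k φ) (h2 : Pord l ψ) :
    Pord (k + l) (φ * ψ) := by
  intro d hd
  classical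
  rw [MvPowerSeries.coeff_mul]
  apply Finset.sum_eq_zero
  intro p hp
  rw [Finset.HasAntidiagonal.mem_antidiagonal] at hp
  have hdd : dg p.1 + dg p.2 = dg d := by rw [← dg_add, hp]
  rcases lt_or_ge (dg p.1) k with h' | h'
  · rw [h1 p.1 h', zero_mul]
  · rw [h2 p.2 (by omega), mul_zero]

lemma Pord_one_of {φ : MvPowerSeries (Fin n) R}
    (h : MvPowerSeries.constantCoeff φ = 0) : Pord 1 φ := by
  intro d hd
  interval_cases h' : dg d
  · rw [dg_eq_zero h']
    exact h

lemma Pord_prod {ι : Type*} (s : Finset ι) (u : ι → MvPowerSeries (Fin n) R) (k : ι → ℕ)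
    (h : ∀ j ∈ s, Pord (k j) (u j)) :
    Pord (∑ j ∈ s, k j) (∏ j ∈ s, u j) := by
  classical
  induction s using Finset.cons_induction with
  | empty => simp only [Finset.sum_empty]; intro d hd; exact absurd hd (Nat.not_lt_zero _)
  | cons a t ha ih =>
    rw [Finset.prod_cons, Finset.sum_cons]
    exact Pord_mul (h a (Finset.mem_cons_self a t))
      (ih (fun j hj => h j (Finset.mem_cons_of_mem hj)))

lemma Pord_pow {φ : MvPowerSeries (Fin n) R} (h : Pord 1 φ) (k : ℕ) : Pord k (φ ^ k) := by
  induction k with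
  | zero => intro d hd; exact absurd hd (Nat.not_lt_zero _)
  | succ k ih => rw [pow_succ]; exact Pord_mul ih h

lemma Pord_sub_prod {ι : Type*} (s : Finset ι) (u v : ι → MvPowerSeries (Fin n) R) (k : ι → ℕ)
    (hu : ∀ j ∈ s, Pord (k j) (u j)) (hv : ∀ j ∈ s, Pord (k j) (v j))
    (huv : ∀ j ∈ s, Pord (k j + 1) (u j - v j)) :
    Pord ((∑ j ∈ s, k j) + 1) ((∏ j ∈ s, u j) - ∏ j ∈ s, v j) := by
  classical
  induction s using Finset.cons_induction with
  | empty => simp only [Finset.prod_empty, sub_self]; exact Pord_zero _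
  | cons a t ha ih =>
    rw [Finset.prod_cons, Finset.prod_cons, Finset.sum_cons]
    have key : u a * ∏ j ∈ t, u j - v a * ∏ j ∈ t, v j
        = u a * ((∏ j ∈ t, u j) - ∏ j ∈ t, v j) + (u a - v a) * ∏ j ∈ t, v j := by ring
    rw [key]
    apply Pord_add
    · exact (Pord_mul (hu a (Finset.mem_cons_self a t))
        (ih (fun j hj => hu j (Finset.mem_cons_of_mem hj))
            (fun j hj => hv j (Finset.mem_cons_of_mem hj))
            (fun j hj => huv j (Finset.mem_cons_of_mem hj)))).of_le (by omega)
    · exact (Pord_mul (huv a (Finset.mem_cons_self a t))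
        (Pord_prod t v k (fun j hj => hv j (Finset.mem_cons_of_mem hj)))).of_le (by omega)

variable {f : Fin n → MvPowerSeries (Fin n) R}

lemma Pord_prod_pow (hf0 : ∀ i, MvPowerSeries.constantCoeff (f i) = 0)
    (e : Fin n →₀ ℕ) : Pord (dg e) (∏ j : Fin n, (f j) ^ (e j)) := by
  rw [dg_eq_sum]
  exact Pord_prod _ _ _ (fun j _ => Pord_pow (Pord_one_of (hf0 j)) (e j))

/-- the coefficient of `substPS f g` as a sum over any sufficiently large index set -/
lemma coeff_substPS_superset (hf0 : ∀ i, MvPowerSeries.constantCoeff (f i) = 0)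
    (g : MvPowerSeries (Fin n) R) (d : Fin n →₀ ℕ) (T : Finset (Fin n →₀ ℕ))
    (hT : ∀ e, dg e ≤ dg d → e ∈ T) :
    MvPowerSeries.coeff d (substPS f g) =
      ∑ e ∈ T, MvPowerSeries.coeff e g *
        MvPowerSeries.coeff d (∏ j : Fin n, (f j) ^ (e j)) := by
  classical
  have key : ∀ e : Fin n →₀ ℕ, dg d < dg e →
      MvPowerSeries.coeff d (∏ j : Fin n, (f j) ^ (e j)) = 0 :=
    fun e he => Pord_prod_pow hf0 e d he
  rw [coeff_substPS]
  have h1 := Finset.sum_subset (Finset.subset_union_left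
      (s₁ := Finset.Iic (bnd (dg d))) (s₂ := T))
      (f := fun e => MvPowerSeries.coeff e g *
        MvPowerSeries.coeff d (∏ j : Fin n, (f j) ^ (e j)))
      (fun e _ he => by
        obtain ⟨j, hj⟩ := not_forall.mp (fun hc => he (mem_Iic_bnd.mpr hc))
        rw [key e (by have := dg_apply_le e j; omega), mul_zero])
  have h2 := Finset.sum_subset (Finset.subset_union_right
      (s₁ := Finset.Iic (bnd (dg d))) (s₂ := T))
      (f := fun e => MvPowerSeries.coeff e g *
        MvPowerSeries.coeff d (∏ j : Fin n, (f j) ^ (e j)))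
      (fun e _ he => by rw [key e (by have := mt (hT e) he; omega), mul_zero])
  rw [h1]
  exact h2.symm

lemma substPS_add (f : Fin n → MvPowerSeries (Fin n) R) (g h : MvPowerSeries (Fin n) R) :
    substPS f (g + h) = substPS f g + substPS f h := by
  ext d
  simp [coeff_substPS, map_add, add_mul, Finset.sum_add_distrib]

lemma substPS_zero (f : Fin n → MvPowerSeries (Fin n) R) : substPS f 0 = 0 := by
  ext d
  simp [coeff_substPS]

lemma prod_pow_single (φ : Fin n → MvPowerSeries (Fin n) R) (i : Fin n) :
    (∏ j : Fin n, (φ j) ^ ((Finsupp.single i 1) j)) = φ i := by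
  classical
  rw [Finset.prod_eq_single i]
  · rw [Finsupp.single_eq_same, pow_one]
  · intro j _ hj
    rw [Finsupp.single_eq_of_ne' (Ne.symm hj), pow_zero]
  · intro h; exact absurd (Finset.mem_univ i) h

lemma substPS_one (f : Fin n → MvPowerSeries (Fin n) R) : substPS f 1 = 1 := by
  classical
  ext d
  rw [coeff_substPS, Finset.sum_eq_single 0 ?_ ?_]
  · simp [MvPowerSeries.coeff_one]
  · intro e _ hne
    simp [MvPowerSeries.coeff_one, hne]
  · intro h0
    exact absurd (mem_Iic_bnd.mpr (fun j => by simp)) h0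

lemma substPS_mul (hf0 : ∀ i, MvPowerSeries.constantCoeff (f i) = 0)
    (g h : MvPowerSeries (Fin n) R) :
    substPS f (g * h) = substPS f g * substPS f h := by
  classical
  ext d
  set B : Finset (Fin n →₀ ℕ) := Finset.Iic (bnd (dg d)) with hBdef
  have hBmem : ∀ {e : Fin n →₀ ℕ}, e ∈ B ↔ ∀ j, e j ≤ dg d := fun {e} => mem_Iic_bnd
  have hvanish : ∀ e : Fin n →₀ ℕ, dg d < dg e →
      MvPowerSeries.coeff d (∏ j : Fin n, (f j) ^ (e j)) = 0 :=
    fun e he => Pord_prod_pow hf0 e d he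
  have hFadd : ∀ p q : Fin n →₀ ℕ, (∏ j : Fin n, (f j) ^ ((p + q) j)) =
      (∏ j : Fin n, (f j) ^ (p j)) * (∏ j : Fin n, (f j) ^ (q j)) := by
    intro p q
    rw [← Finset.prod_mul_distrib]
    apply Finset.prod_congr rfl
    intro j _
    rw [Finsupp.add_apply, pow_add]
  have step1 : ∀ e ∈ B, MvPowerSeries.coeff e (g * h) *
        MvPowerSeries.coeff d (∏ j : Fin n, (f j) ^ (e j))
      = ∑ x ∈ Finset.HasAntidiagonal.antidiagonal e, MvPowerSeries.coeff x.1 g * MvPowerSeries.coeff x.2 h *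
          MvPowerSeries.coeff d (∏ j : Fin n, (f j) ^ ((x.1 + x.2) j)) := by
    intro e he
    rw [MvPowerSeries.coeff_mul, Finset.sum_mul]
    apply Finset.sum_congr rfl
    intro x hx
    rw [Finset.HasAntidiagonal.mem_antidiagonal] at hx
    rw [← hx]
  have hdisj : (↑B : Set (Fin n →₀ ℕ)).PairwiseDisjoint
      (fun e => (Finset.HasAntidiagonal.antidiagonal e : Finset ((Fin n →₀ ℕ) × (Fin n →₀ ℕ)))) := by
    intro e1 _ e2 _ hne
    refine Finset.disjoint_left.mpr ?_
    intro x hx1 hx2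
    rw [Finset.HasAntidiagonal.mem_antidiagonal] at hx1 hx2
    exact hne (hx1 ▸ hx2)
  have hsetEq : B.biUnion (fun e => Finset.HasAntidiagonal.antidiagonal e)
      = (B ×ˢ B).filter (fun x => x.1 + x.2 ∈ B) := by
    ext x
    simp only [Finset.mem_biUnion, Finset.HasAntidiagonal.mem_antidiagonal, Finset.mem_filter,
      Finset.mem_product]
    constructor
    · rintro ⟨e, heB, hxe⟩
      subst hxe
      have h1 := hBmem.mp heB
      refine ⟨⟨hBmem.mpr (fun j => ?_), hBmem.mpr (fun j => ?_)⟩, heB⟩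
      · have := h1 j
        rw [Finsupp.add_apply] at this
        omega
      · have := h1 j
        rw [Finsupp.add_apply] at this
        omega
    · rintro ⟨⟨_, _⟩, h3⟩
      exact ⟨x.1 + x.2, h3, rfl⟩
  have hvan2 : ∀ x ∈ B ×ˢ B, x ∉ (B ×ˢ B).filter (fun x => x.1 + x.2 ∈ B) →
      MvPowerSeries.coeff x.1 g * MvPowerSeries.coeff x.2 h *
        MvPowerSeries.coeff d (∏ j : Fin n, (f j) ^ ((x.1 + x.2) j)) = 0 := by
    intro x hx hxf
    have hnot : x.1 + x.2 ∉ B := by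
      intro hc
      exact hxf (Finset.mem_filter.mpr ⟨hx, hc⟩)
    obtain ⟨j, hj⟩ := not_forall.mp (fun hc => hnot (hBmem.mpr hc))
    rw [hvanish _ (by have := dg_apply_le (x.1 + x.2) j; omega), mul_zero]
  have common : ∑ e ∈ B, MvPowerSeries.coeff e (g * h) *
        MvPowerSeries.coeff d (∏ j : Fin n, (f j) ^ (e j))
      = ∑ p ∈ B, ∑ q ∈ B, MvPowerSeries.coeff p g * MvPowerSeries.coeff q h *
          MvPowerSeries.coeff d (∏ j : Fin n, (f j) ^ ((p + q) j)) := by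
    rw [Finset.sum_congr rfl step1, ← Finset.sum_biUnion hdisj, hsetEq,
      Finset.sum_subset (Finset.filter_subset _ _) hvan2, Finset.sum_product]
  have hexp : ∀ x : (Fin n →₀ ℕ) × (Fin n →₀ ℕ), x ∈ Finset.HasAntidiagonal.antidiagonal d →
      MvPowerSeries.coeff x.1 (substPS f g) * MvPowerSeries.coeff x.2 (substPS f h) =
      ∑ p ∈ B, ∑ q ∈ B,
        (MvPowerSeries.coeff p g * MvPowerSeries.coeff x.1 (∏ j : Fin n, (f j) ^ (p j))) *
        (MvPowerSeries.coeff q h * MvPowerSeries.coeff x.2 (∏ j : Fin n, (f j) ^ (q j))) := by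
    intro x hx
    rw [Finset.HasAntidiagonal.mem_antidiagonal] at hx
    have hx1 : dg x.1 ≤ dg d := by rw [← hx, dg_add]; omega
    have hx2 : dg x.2 ≤ dg d := by rw [← hx, dg_add]; omega
    rw [coeff_substPS_superset hf0 g x.1 B
        (fun e hde => hBmem.mpr (fun j => le_trans (dg_apply_le e j) (le_trans hde hx1))),
      coeff_substPS_superset hf0 h x.2 B
        (fun e hde => hBmem.mpr (fun j => le_trans (dg_apply_le e j) (le_trans hde hx2))),
      Finset.sum_mul_sum]
  have hr : MvPowerSeries.coeff d (substPS f g * substPS f h)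
      = ∑ p ∈ B, ∑ q ∈ B, MvPowerSeries.coeff p g * MvPowerSeries.coeff q h *
          MvPowerSeries.coeff d (∏ j : Fin n, (f j) ^ ((p + q) j)) := by
    rw [MvPowerSeries.coeff_mul, Finset.sum_congr rfl hexp, Finset.sum_comm]
    apply Finset.sum_congr rfl
    intro p _
    rw [Finset.sum_comm]
    apply Finset.sum_congr rfl
    intro q _
    have hring : ∀ x ∈ Finset.HasAntidiagonal.antidiagonal d,
        (MvPowerSeries.coeff p g * MvPowerSeries.coeff x.1 (∏ j : Fin n, (f j) ^ (p j))) *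
        (MvPowerSeries.coeff q h * MvPowerSeries.coeff x.2 (∏ j : Fin n, (f j) ^ (q j)))
        = (MvPowerSeries.coeff p g * MvPowerSeries.coeff q h) *
          (MvPowerSeries.coeff x.1 (∏ j : Fin n, (f j) ^ (p j)) *
           MvPowerSeries.coeff x.2 (∏ j : Fin n, (f j) ^ (q j))) := fun x _ => by ring
    rw [Finset.sum_congr rfl hring, ← Finset.mul_sum, ← MvPowerSeries.coeff_mul, ← hFadd]
  rw [coeff_substPS, hr]
  exact common

/-- `substPS f` as a ring homomorphism. -/
noncomputable def substHom (f : Fin n → MvPowerSeries (Fin n) R)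
    (hf0 : ∀ i, MvPowerSeries.constantCoeff (f i) = 0) :
    MvPowerSeries (Fin n) R →+* MvPowerSeries (Fin n) R where
  toFun := substPS f
  map_one' := substPS_one f
  map_mul' := substPS_mul hf0
  map_zero' := substPS_zero f
  map_add' := substPS_add f

lemma substHom_apply (hf0 : ∀ i, MvPowerSeries.constantCoeff (f i) = 0)
    (g : MvPowerSeries (Fin n) R) : substHom f hf0 g = substPS f g := rfl

lemma substPS_X (hf0 : ∀ i, MvPowerSeries.constantCoeff (f i) = 0) (i : Fin n) :
    substPS f (MvPowerSeries.X i) = f i := by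
  classical
  ext d
  rw [coeff_substPS, Finset.sum_eq_single (Finsupp.single i 1) ?_ ?_]
  · rw [MvPowerSeries.coeff_X, if_pos rfl, one_mul, prod_pow_single]
  · intro e _ hne
    rw [MvPowerSeries.coeff_X, if_neg hne, zero_mul]
  · intro h0
    rw [MvPowerSeries.coeff_X, if_pos rfl, one_mul, prod_pow_single]
    have hnd : ¬ (1 ≤ dg d) := by
      intro h1
      exact h0 (mem_Iic_bnd.mpr (fun j => by
        rcases eq_or_ne j i with rfl | hj
        · simpa using h1
        · simp [Finsupp.single_eq_of_ne' (Ne.symm hj)]))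
    have hd0 : d = 0 := dg_eq_zero (by omega)
    rw [hd0, MvPowerSeries.coeff_zero_eq_constantCoeff_apply]
    exact hf0 i

lemma substPS_C (f : Fin n → MvPowerSeries (Fin n) R) (r : R) :
    substPS f (MvPowerSeries.C r) = MvPowerSeries.C r := by
  classical
  ext d
  rw [coeff_substPS, Finset.sum_eq_single 0 ?_ ?_]
  · simp [MvPowerSeries.coeff_C, MvPowerSeries.coeff_one, mul_ite]
  · intro e _ hne
    simp [MvPowerSeries.coeff_C, hne]
  · intro h0
    exact absurd (mem_Iic_bnd.mpr (fun j => by simp)) h0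

lemma prod_X_pow (e : Fin n →₀ ℕ) :
    (∏ j : Fin n, (MvPowerSeries.X j : MvPowerSeries (Fin n) R) ^ (e j)) =
      MvPowerSeries.monomial e 1 := by
  classical
  have key : ∀ s : Finset (Fin n),
      (∏ j ∈ s, (MvPowerSeries.X j : MvPowerSeries (Fin n) R) ^ (e j)) =
      MvPowerSeries.monomial (∑ j ∈ s, Finsupp.single j (e j)) 1 := by
    intro s
    induction s using Finset.cons_induction with
    | empty => simp
    | cons a t ha ih =>
      rw [Finset.prod_cons, Finset.sum_cons, ih, MvPowerSeries.X_pow_eq,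
        MvPowerSeries.monomial_mul_monomial, one_mul]
  rw [key Finset.univ, Finsupp.univ_sum_single]

lemma substPS_id (h : MvPowerSeries (Fin n) R) :
    substPS (fun i => MvPowerSeries.X i) h = h := by
  classical
  ext d
  rw [coeff_substPS, Finset.sum_eq_single d ?_ ?_]
  · rw [prod_X_pow, MvPowerSeries.coeff_monomial, if_pos rfl, mul_one]
  · intro e _ hne
    rw [prod_X_pow, MvPowerSeries.coeff_monomial, if_neg (fun hh => hne hh.symm), mul_zero]
  · intro h0
    exact absurd (mem_Iic_bnd.mpr (fun j => dg_apply_le d j)) h0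

lemma constantCoeff_substPS (f : Fin n → MvPowerSeries (Fin n) R)
    (g : MvPowerSeries (Fin n) R) :
    MvPowerSeries.constantCoeff (substPS f g) =
      MvPowerSeries.constantCoeff g := by
  classical
  rw [← MvPowerSeries.coeff_zero_eq_constantCoeff_apply,
    ← MvPowerSeries.coeff_zero_eq_constantCoeff_apply,
    coeff_substPS, Finset.sum_eq_single 0 ?_ ?_]
  · simp
  · intro e he hne
    exfalso
    apply hne
    have := mem_Iic_bnd.mp he
    ext j
    have := this j
    rw [dg_zero] at this
    simpa using this
  · intro h0
    exact absurd (mem_Iic_bnd.mpr (fun j => by simp)) h0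

lemma substPS_assoc {A B : Fin n → MvPowerSeries (Fin n) R}
    (hA : ∀ i, MvPowerSeries.constantCoeff (A i) = 0)
    (hB : ∀ i, MvPowerSeries.constantCoeff (B i) = 0)
    (h : MvPowerSeries (Fin n) R) :
    substPS A (substPS B h) = substPS (fun i => substPS A (B i)) h := by
  classical
  ext d
  set T : Finset (Fin n →₀ ℕ) := Finset.Iic (bnd (n * dg d + dg d)) with hTdef
  have hcomp0 : ∀ i, MvPowerSeries.constantCoeff (substPS A (B i)) = 0 := fun i => by
    rw [constantCoeff_substPS]; exact hB i
  have hBd : ∀ e : Fin n →₀ ℕ, e ∈ Finset.Iic (bnd (dg d)) → dg e ≤ n * dg d := by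
    intro e he
    rw [dg_eq_sum]
    calc ∑ j, e j ≤ ∑ _j : Fin n, dg d :=
          Finset.sum_le_sum (fun j _ => mem_Iic_bnd.mp he j)
      _ = n * dg d := by simp [Finset.sum_const, Finset.card_univ, mul_comm]
  have hL : ∀ e : Fin n →₀ ℕ, e ∈ Finset.Iic (bnd (dg d)) →
      MvPowerSeries.coeff e (substPS B h) =
        ∑ u ∈ T, MvPowerSeries.coeff u h *
          MvPowerSeries.coeff e (∏ j : Fin n, (B j) ^ (u j)) := by
    intro e he
    exact coeff_substPS_superset hB h e T (fun u hu => mem_Iic_bnd.mpr (fun j => by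
      have h1 := dg_apply_le u j
      have h2 := hBd e he
      omega))
  have hprod : ∀ u : Fin n →₀ ℕ, (∏ j : Fin n, (substPS A (B j)) ^ (u j)) =
      substPS A (∏ j : Fin n, (B j) ^ (u j)) := by
    intro u
    simp only [← substHom_apply hA, ← map_pow, ← map_prod]
  calc MvPowerSeries.coeff d (substPS A (substPS B h))
      = ∑ e ∈ Finset.Iic (bnd (dg d)),
          (∑ u ∈ T, MvPowerSeries.coeff u h *
            MvPowerSeries.coeff e (∏ j : Fin n, (B j) ^ (u j))) *
          MvPowerSeries.coeff d (∏ j : Fin n, (A j) ^ (e j)) := by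
        rw [coeff_substPS]
        exact Finset.sum_congr rfl (fun e he => by rw [hL e he])
    _ = ∑ u ∈ T, ∑ e ∈ Finset.Iic (bnd (dg d)),
          MvPowerSeries.coeff u h * (MvPowerSeries.coeff e (∏ j : Fin n, (B j) ^ (u j)) *
            MvPowerSeries.coeff d (∏ j : Fin n, (A j) ^ (e j))) := by
        simp_rw [Finset.sum_mul, mul_assoc]
        exact Finset.sum_comm
    _ = ∑ u ∈ T, MvPowerSeries.coeff u h *
          MvPowerSeries.coeff d (∏ j : Fin n, (substPS A (B j)) ^ (u j)) := by
        apply Finset.sum_congr rfl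
        intro u _
        rw [← Finset.mul_sum, hprod u, coeff_substPS]
    _ = MvPowerSeries.coeff d (substPS (fun i => substPS A (B i)) h) := by
        refine (coeff_substPS_superset hcomp0 h d T (fun u hu => mem_Iic_bnd.mpr (fun j => by
          have h1 := dg_apply_le u j
          omega))).symm

/-! ### Linear substitutions -/

/-- the tuple of linear forms with coefficient matrix `a` -/
noncomputable def lin (a : Fin n → Fin n → R) : Fin n → MvPowerSeries (Fin n) R :=
  fun j => ∑ k, MvPowerSeries.monomial (Finsupp.single k 1) (a j k)

lemma constantCoeff_lin (a : Fin n → Fin n → R) (j : Fin n) :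
    MvPowerSeries.constantCoeff (lin a j) = 0 := by
  rw [lin, ← MvPowerSeries.coeff_zero_eq_constantCoeff_apply, map_sum]
  apply Finset.sum_eq_zero
  intro k _
  rw [MvPowerSeries.coeff_monomial, if_neg]
  exact fun hh => one_ne_zero (Finsupp.single_eq_zero.mp hh.symm)

lemma coeff_single_lin (a : Fin n → Fin n → R) (j k : Fin n) :
    MvPowerSeries.coeff (Finsupp.single k 1) (lin a j) = a j k := by
  classical
  rw [lin, map_sum, Finset.sum_eq_single k ?_ ?_]
  · rw [MvPowerSeries.coeff_monomial, if_pos rfl]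
  · intro l _ hl
    rw [MvPowerSeries.coeff_monomial, if_neg]
    exact fun hh => hl ((Finsupp.single_left_inj one_ne_zero).mp hh).symm
  · intro hk
    exact absurd (Finset.mem_univ k) hk

lemma lin_id : lin (fun j l => if j = l then (1:R) else 0) =
    fun j => (MvPowerSeries.X j : MvPowerSeries (Fin n) R) := by
  classical
  funext j
  rw [lin, Finset.sum_eq_single j ?_ ?_]
  · rw [if_pos rfl, ← pow_one (MvPowerSeries.X j : MvPowerSeries (Fin n) R),
      MvPowerSeries.X_pow_eq]
  · intro l _ hl
    rw [if_neg (Ne.symm hl), map_zero]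
  · intro hj
    exact absurd (Finset.mem_univ j) hj

lemma substPS_smul (f : Fin n → MvPowerSeries (Fin n) R) (r : R)
    (g : MvPowerSeries (Fin n) R) : substPS f (r • g) = r • substPS f g := by
  ext d
  rw [map_smul, coeff_substPS, coeff_substPS, smul_eq_mul, Finset.mul_sum]
  apply Finset.sum_congr rfl
  intro e _
  rw [map_smul, smul_eq_mul, mul_assoc]

lemma monomial_single_eq (k : Fin n) (r : R) :
    MvPowerSeries.monomial (Finsupp.single k 1) r =
      r • (MvPowerSeries.X k : MvPowerSeries (Fin n) R) := by
  ext d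
  rw [MvPowerSeries.coeff_monomial, map_smul, MvPowerSeries.coeff_X, smul_eq_mul, mul_ite,
    mul_one, mul_zero]

lemma substPS_lin_lin (a b : Fin n → Fin n → R) (j : Fin n) :
    substPS (lin a) (lin b j) = lin (fun j l => ∑ k, b j k * a k l) j := by
  classical
  have h0 : ∀ jj, MvPowerSeries.constantCoeff (lin a jj) = 0 := constantCoeff_lin a
  have hsum : substPS (lin a) (∑ k, MvPowerSeries.monomial (Finsupp.single k 1) (b j k)) =
      ∑ k, substPS (lin a) (MvPowerSeries.monomial (Finsupp.single k 1) (b j k)) :=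
    map_sum (substHom (lin a) h0) _ _
  rw [lin]
  rw [hsum]
  have step : ∀ k, substPS (lin a) (MvPowerSeries.monomial (Finsupp.single k 1) (b j k)) =
      ∑ l, MvPowerSeries.monomial (Finsupp.single l 1) (b j k * a k l) := by
    intro k
    rw [monomial_single_eq, substPS_smul, substPS_X h0, lin, Finset.smul_sum]
    apply Finset.sum_congr rfl
    intro l _
    rw [← map_smul, smul_eq_mul]
  rw [Finset.sum_congr rfl (fun k _ => step k), Finset.sum_comm, lin]
  apply Finset.sum_congr rfl
  intro l _
  rw [← map_sum]

lemma substPS_lin_toggle {a b : Fin n → Fin n → R}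
    (hab : ∀ j l, ∑ k, b j k * a k l = if j = l then (1:R) else 0)
    (w : MvPowerSeries (Fin n) R) :
    substPS (lin a) (substPS (lin b) w) = w := by
  rw [substPS_assoc (fun j => constantCoeff_lin a j) (fun j => constantCoeff_lin b j)]
  have : (fun i => substPS (lin a) (lin b i)) = fun i => (MvPowerSeries.X i :
      MvPowerSeries (Fin n) R) := by
    funext i
    rw [substPS_lin_lin]
    have : (fun j l => ∑ k, b j k * a k l) = (fun j l => if j = l then (1:R) else 0) := by
      funext j l; exact hab j l
    rw [this, lin_id]
  rw [this, substPS_id]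

/-- linear-degree coefficients of `f` -/
noncomputable def jac (f : Fin n → MvPowerSeries (Fin n) R) : Fin n → Fin n → R :=
  fun i j => MvPowerSeries.coeff (Finsupp.single j 1) (f i)

lemma Pord_two_sub_lin (hf0 : ∀ i, MvPowerSeries.constantCoeff (f i) = 0)
    (j : Fin n) : Pord 2 (f j - lin (jac f) j) := by
  intro d hd
  rw [map_sub]
  rcases (by omega : dg d = 0 ∨ dg d = 1) with h | h
  · rw [dg_eq_zero h, MvPowerSeries.coeff_zero_eq_constantCoeff_apply, hf0 j,
      MvPowerSeries.coeff_zero_eq_constantCoeff_apply, constantCoeff_lin, sub_zero]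
  · obtain ⟨k, rfl⟩ := dg_eq_one h
    rw [coeff_single_lin]
    exact sub_self _

/-- Claim A: in top degree, coefficients of `f^e` only depend on the linear part. -/
lemma coeff_prod_pow_eq_lin (hf0 : ∀ i, MvPowerSeries.constantCoeff (f i) = 0)
    {e d : Fin n →₀ ℕ} (he : dg d ≤ dg e) :
    MvPowerSeries.coeff d (∏ j : Fin n, (f j) ^ (e j)) =
      MvPowerSeries.coeff d (∏ j : Fin n, (lin (jac f) j) ^ (e j)) := by
  classical
  have hdiff : Pord (dg e + 1)
      ((∏ j : Fin n, (f j) ^ (e j)) - ∏ j : Fin n, (lin (jac f) j) ^ (e j)) := by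
    have hA : ∀ j ∈ Finset.univ, Pord (e j) ((f j) ^ (e j)) :=
      fun j _ => Pord_pow (Pord_one_of (hf0 j)) _
    have hB : ∀ j ∈ Finset.univ, Pord (e j) ((lin (jac f) j) ^ (e j)) :=
      fun j _ => Pord_pow (Pord_one_of (constantCoeff_lin _ j)) _
    have hAB : ∀ j ∈ Finset.univ, Pord (e j + 1) ((f j) ^ (e j) - (lin (jac f) j) ^ (e j)) := by
      intro j _
      have h2 := Pord_two_sub_lin hf0 j
      have hkey := Pord_sub_prod (Finset.range (e j)) (fun _ => f j) (fun _ => lin (jac f) j)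
        (fun _ => 1) (fun _ _ => Pord_one_of (hf0 j))
        (fun _ _ => Pord_one_of (constantCoeff_lin _ j)) (fun _ _ => h2)
      simpa [Finset.prod_const, Finset.card_range] using hkey
    have hkey := Pord_sub_prod Finset.univ (fun j => (f j) ^ (e j))
      (fun j => (lin (jac f) j) ^ (e j)) (fun j => e j) hA hB hAB
    exact hkey.of_le (by rw [dg_eq_sum])
  have h0 := hdiff d (by omega)
  rw [map_sub, sub_eq_zero] at h0
  exact h0

/-! ### Fixed point machinery -/

lemma exists_unique_fixed (Ψ : MvPowerSeries (Fin n) R → MvPowerSeries (Fin n) R)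
    (H : ∀ w w' d, (∀ e, dg e < dg d → MvPowerSeries.coeff e w = MvPowerSeries.coeff e w') →
      MvPowerSeries.coeff d (Ψ w) = MvPowerSeries.coeff d (Ψ w')) :
    ∃! w, Ψ w = w := by
  classical
  set A : ℕ → MvPowerSeries (Fin n) R := fun m => Ψ^[m] 0 with hA
  have hAsucc : ∀ m, A (m + 1) = Ψ (A m) := by
    intro m
    rw [hA]
    exact Function.iterate_succ_apply' Ψ m 0
  have agree : ∀ k m m', k ≤ m → k ≤ m' → ∀ d, dg d < k →
      MvPowerSeries.coeff d (A m) = MvPowerSeries.coeff d (A m') := by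
    intro k
    induction k with
    | zero => intro m m' _ _ d hd; exact absurd hd (Nat.not_lt_zero _)
    | succ k ih =>
      intro m m' hm hm' d hd
      obtain ⟨m0, rfl⟩ : ∃ m0, m = m0 + 1 := ⟨m - 1, by omega⟩
      obtain ⟨m0', rfl⟩ : ∃ m0', m' = m0' + 1 := ⟨m' - 1, by omega⟩
      rw [hAsucc, hAsucc]
      exact H (A m0) (A m0') d (fun e he => ih m0 m0' (by omega) (by omega) e (by omega))
  set w : MvPowerSeries (Fin n) R := fun d => MvPowerSeries.coeff d (A (dg d + 1)) with hw
  have hwc : ∀ d, MvPowerSeries.coeff d w = MvPowerSeries.coeff d (A (dg d + 1)) :=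
    fun d => rfl
  have hwagree : ∀ m d, dg d < m →
      MvPowerSeries.coeff d w = MvPowerSeries.coeff d (A m) := by
    intro m d hd
    rw [hwc]
    exact agree (dg d + 1) _ m (le_refl _) (by omega) d (by omega)
  have hfixw : Ψ w = w := by
    ext d
    have h1 : MvPowerSeries.coeff d (Ψ w) = MvPowerSeries.coeff d (Ψ (A (dg d + 1))) :=
      H w (A (dg d + 1)) d (fun e he => hwagree (dg d + 1) e (by omega))
    rw [h1, ← hAsucc, hwc]
    exact agree (dg d + 1) (dg d + 1 + 1) (dg d + 1) (by omega) (by omega) d (by omega)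
  refine ⟨w, hfixw, ?_⟩
  intro w' hfix
  have key : ∀ k d, dg d < k → MvPowerSeries.coeff d w' = MvPowerSeries.coeff d w := by
    intro k
    induction k with
    | zero => intro d hd; exact absurd hd (Nat.not_lt_zero _)
    | succ k ih =>
      intro d hd
      have hh := H w' w d (fun e he => ih e (by omega))
      rw [hfix, hfixw] at hh
      exact hh
  ext d
  exact key (dg d + 1) d (by omega)

/-! ### The main solving lemma -/

lemma solve (hf0 : ∀ i, MvPowerSeries.constantCoeff (f i) = 0)
    (hjac : IsUnit (Matrix.det (Matrix.of (jac f))))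
    (h : MvPowerSeries (Fin n) R) :
    ∃! w, substPS f w = h := by
  classical
  set a : Fin n → Fin n → R := jac f with ha
  set b : Fin n → Fin n → R := fun i j => (Matrix.of a)⁻¹ i j with hb
  have hab : ∀ j l, ∑ k, a j k * b k l = if j = l then (1:R) else 0 := by
    intro j l
    have h1 := Matrix.mul_nonsing_inv (Matrix.of a) hjac
    have h2 := congrFun (congrFun h1 j) l
    rw [Matrix.mul_apply] at h2
    have h3 : ∑ k, a j k * b k l = (1 : Matrix (Fin n) (Fin n) R) j l := h2
    rw [h3, Matrix.one_apply]
  have hba : ∀ j l, ∑ k, b j k * a k l = if j = l then (1:R) else 0 := by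
    intro j l
    have h1 := Matrix.nonsing_inv_mul (Matrix.of a) hjac
    have h2 := congrFun (congrFun h1 j) l
    rw [Matrix.mul_apply] at h2
    have h3 : ∑ k, b j k * a k l = (1 : Matrix (Fin n) (Fin n) R) j l := h2
    rw [h3, Matrix.one_apply]
  have hLa0 : ∀ j, MvPowerSeries.constantCoeff (lin a j) = 0 := constantCoeff_lin a
  have hLb0 : ∀ j, MvPowerSeries.constantCoeff (lin b j) = 0 := constantCoeff_lin b
  have toggle1 : ∀ w : MvPowerSeries (Fin n) R,
      substPS (lin a) (substPS (lin b) w) = w := substPS_lin_toggle hba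
  have toggle2 : ∀ w : MvPowerSeries (Fin n) R,
      substPS (lin b) (substPS (lin a) w) = w := substPS_lin_toggle hab
  set Ψ : MvPowerSeries (Fin n) R → MvPowerSeries (Fin n) R :=
    fun w => substPS (lin b) (h + (substPS (lin a) w - substPS f w)) with hΨ
  have keyH : ∀ w w' d, (∀ e, dg e < dg d →
        MvPowerSeries.coeff e w = MvPowerSeries.coeff e w') →
      MvPowerSeries.coeff d (Ψ w) = MvPowerSeries.coeff d (Ψ w') := by
    intro w w' d hagree
    rw [hΨ]
    dsimp only
    rw [coeff_substPS, coeff_substPS]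
    apply Finset.sum_congr rfl
    intro e he
    rcases le_or_gt (dg e) (dg d) with h1 | h1
    · congr 1
      rw [map_add, map_add, map_sub, map_sub]
      congr 1
      rw [coeff_substPS, coeff_substPS, coeff_substPS, coeff_substPS,
        ← Finset.sum_sub_distrib, ← Finset.sum_sub_distrib]
      apply Finset.sum_congr rfl
      intro u hu
      rw [← mul_sub, ← mul_sub]
      rcases lt_trichotomy (dg u) (dg e) with h2 | h2 | h2
      · rw [hagree u (by omega)]
      · rw [coeff_prod_pow_eq_lin hf0 (le_of_eq h2.symm), ← ha, sub_self, mul_zero, mul_zero]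
      · rw [Pord_prod_pow hLa0 u e (by omega), Pord_prod_pow hf0 u e (by omega),
          sub_self, mul_zero, mul_zero]
    · rw [Pord_prod_pow hLb0 e d h1, mul_zero, mul_zero]
  obtain ⟨w, hwfix, hwuniq⟩ := exists_unique_fixed Ψ keyH
  have equiv : ∀ w : MvPowerSeries (Fin n) R, Ψ w = w ↔ substPS f w = h := by
    intro w
    constructor
    · intro hfix
      have h1 := congrArg (substPS (lin a)) hfix
      rw [hΨ] at h1
      dsimp only at h1
      rw [toggle1] at h1
      linear_combination -h1
    · intro hsol
      rw [hΨ]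
      dsimp only
      rw [hsol]
      have h1 : h + (substPS (lin a) w - h) = substPS (lin a) w := by ring
      rw [h1, toggle2]
  exact ⟨w, (equiv w).mp hwfix, fun w' hw' => hwuniq w' ((equiv w').mpr hw')⟩

end IFTAux

/-- Formal inverse function theorem: let `R` be a commutative ring and
`f ∈ R[[x₁,…,xₙ]]ⁿ` with `f(0) = 0` and `det((Jf)(0))` a unit in `R`. Then there is a
unique `g ∈ R[[x₁,…,xₙ]]ⁿ` with `g(0) = 0` and `g(f(x)) = f(g(x)) = x`. -/
theorem stmt_0 {R : Type*} [CommRing R] (n : ℕ)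
    (f : Fin n → MvPowerSeries (Fin n) R)
    (hf0 : ∀ i, MvPowerSeries.constantCoeff (f i) = 0)
    (hjac : IsUnit (Matrix.det (Matrix.of fun i j =>
      MvPowerSeries.coeff (Finsupp.single j 1) (f i)))) :
    ∃! g : Fin n → MvPowerSeries (Fin n) R,
      (∀ i, MvPowerSeries.constantCoeff (g i) = 0) ∧
      (∀ i, substPS f (g i) = MvPowerSeries.X i) ∧
      (∀ i, substPS g (f i) = MvPowerSeries.X i) := by
  classical
  have hjac' : IsUnit (Matrix.det (Matrix.of (IFTAux.jac f))) := hjac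
  have hsolve := fun h => IFTAux.solve hf0 hjac' h
  choose g hg hguniq using fun i => hsolve (MvPowerSeries.X i)
  have hg0 : ∀ i, MvPowerSeries.constantCoeff (g i) = 0 := by
    intro i
    have h1 := congrArg (MvPowerSeries.constantCoeff) (hg i)
    rw [IFTAux.constantCoeff_substPS, MvPowerSeries.constantCoeff_X] at h1
    exact h1
  have hinj : Function.Injective (substPS f) := by
    intro u v huv
    obtain ⟨w, _, hwu⟩ := hsolve (substPS f u)
    rw [hwu u rfl, hwu v huv.symm]
  have hfg : ∀ i, substPS g (f i) = MvPowerSeries.X i := by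
    intro i
    apply hinj
    rw [IFTAux.substPS_assoc hf0 hg0, IFTAux.substPS_X hf0]
    have h1 : (fun j => substPS f (g j)) =
        fun j => (MvPowerSeries.X j : MvPowerSeries (Fin n) R) := funext hg
    rw [h1, IFTAux.substPS_id]
  refine ⟨g, ⟨hg0, hg, hfg⟩, ?_⟩
  rintro g' ⟨_, hg'2, _⟩
  funext i
  exact hguniq i (g' i) (hg'2 i)
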